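/- For 0 < c < 1 and any non-negative integer n, the integral ∫₀^c [1/(1-t)^{n+1} + 1/(1+t)^{n+1}] (c² - t²)^{(n-1)/2} dt equals B((n+1)/2, 1/2) · c^n / (1-c²)^{(n+1)/2}. -/

import Mathlib

open Real intervalIntegral

section Aux

open MeasureTheory Set

/-- Beta function via Gamma functions. -/
noncomputable def betaFn (x y : ℝ) : ℝ := Real.Gamma x * Real.Gamma y / Real.Gamma (x + y)

lemma real_beta (a b : ℝ) (ha : 0 < a) (hb : 0 < b) :
    ∫ u in (0:ℝ)..1, u ^ (a-1) * (1-u) ^ (b-1) = betaFn a b := by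
  have key : ((∫ u in (0:ℝ)..1, u ^ (a-1) * (1-u) ^ (b-1) : ℝ) : ℂ)
      = Complex.betaIntegral a b := by
    rw [Complex.betaIntegral, ← intervalIntegral.integral_ofReal]
    apply intervalIntegral.integral_congr
    intro x hx
    rw [Set.uIcc_of_le (by norm_num : (0:ℝ) ≤ 1)] at hx
    simp only [Complex.ofReal_mul]
    rw [Complex.ofReal_cpow hx.1, Complex.ofReal_cpow (by linarith [hx.2] : (0:ℝ) ≤ 1 - x)]
    push_cast
    ring
  have hmul := Complex.Gamma_mul_Gamma_eq_betaIntegral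
    (s := (a:ℂ)) (t := (b:ℂ)) (by simpa using ha) (by simpa using hb)
  have hΓ : (Real.Gamma (a+b) : ℂ) ≠ 0 := by
    simp only [ne_eq, Complex.ofReal_eq_zero]
    exact (Real.Gamma_pos_of_pos (by linarith)).ne'
  apply Complex.ofReal_injective
  rw [key]
  have : ((a:ℂ) + b) = ((a + b : ℝ) : ℂ) := by push_cast; ring
  rw [this, Complex.Gamma_ofReal, Complex.Gamma_ofReal, Complex.Gamma_ofReal] at hmul
  rw [betaFn]
  push_cast
  rw [eq_div_iff hΓ]
  linear_combination -hmul

lemma beta_int_left (a b : ℝ) (ha : 0 < a) :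
    IntervalIntegrable (fun u : ℝ => u ^ (a-1) * (1-u) ^ (b-1)) volume 0 (1/2) := by
  apply (intervalIntegrable_rpow' (by linarith)).mul_continuousOn
  apply ContinuousOn.rpow_const (by fun_prop)
  intro x hx
  rw [Set.uIcc_of_le (by norm_num)] at hx
  left
  have := hx.2
  intro h
  simp only [sub_eq_zero] at h
  linarith

lemma beta_integrable (a b : ℝ) (ha : 0 < a) (hb : 0 < b) :
    IntervalIntegrable (fun u : ℝ => u ^ (a-1) * (1-u) ^ (b-1)) volume 0 1 := by
  have h2 := (beta_int_left b a hb).comp_sub_left 1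
  simp only [sub_sub_cancel, sub_zero] at h2
  norm_num at h2
  have h2' : IntervalIntegrable (fun u : ℝ => u ^ (a-1) * (1-u) ^ (b-1)) volume (1/2) 1 := by
    apply (h2.symm.congr ?_)
    intro x _
    ring
  exact (beta_int_left a b ha).trans h2'

lemma sqrt_image_Ioo : Real.sqrt '' Ioo (0:ℝ) 1 = Ioo (0:ℝ) 1 := by
  ext y
  constructor
  · rintro ⟨x, hx, rfl⟩
    exact ⟨Real.sqrt_pos.mpr hx.1, by
      calc √x < √1 := Real.sqrt_lt_sqrt hx.1.le hx.2
        _ = 1 := Real.sqrt_one⟩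
  · rintro ⟨hy0, hy1⟩
    exact ⟨y^2, ⟨pow_pos hy0 2, pow_lt_one₀ hy0.le hy1 two_ne_zero⟩, Real.sqrt_sq hy0.le⟩

lemma sqrt_injOn : InjOn Real.sqrt (Ioo (0:ℝ) 1) := by
  intro x hx y hy h
  rw [← Real.sq_sqrt hx.1.le, ← Real.sq_sqrt hy.1.le, h]

lemma sqrt_hasDeriv : ∀ x ∈ Ioo (0:ℝ) 1,
    HasDerivWithinAt Real.sqrt (1/(2*Real.sqrt x)) (Ioo (0:ℝ) 1) x :=
  fun x hx => (Real.hasDerivAt_sqrt hx.1.ne').hasDerivWithinAt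

lemma abs_deriv_smul_eq (n : ℕ) : ∀ u ∈ Ioo (0:ℝ) 1,
    |1/(2*Real.sqrt u)| • (1-(Real.sqrt u)^2) ^ (((n:ℝ)-1)/2)
      = (1/2) * (u ^ ((1:ℝ)/2-1) * (1-u) ^ ((((n:ℝ)+1)/2)-1)) := by
  intro u hu
  have h1 : Real.sqrt u ^ 2 = u := Real.sq_sqrt hu.1.le
  have h2 : (0:ℝ) < Real.sqrt u := Real.sqrt_pos.mpr hu.1
  rw [h1, smul_eq_mul, abs_of_pos (by positivity)]
  have h3 : ((((n:ℝ)+1)/2)-1) = ((n:ℝ)-1)/2 := by ring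
  have h4 : u ^ ((1:ℝ)/2-1) = (Real.sqrt u)⁻¹ := by
    rw [show (1:ℝ)/2-1 = -(1/2) by ring, Real.rpow_neg hu.1.le, ← Real.sqrt_eq_rpow]
  rw [h3, h4]
  field_simp

lemma g_integrableOn (n : ℕ) :
    IntegrableOn (fun x : ℝ => (1-x^2) ^ (((n:ℝ)-1)/2)) (Ioo (0:ℝ) 1) := by
  have := (integrableOn_image_iff_integrableOn_abs_deriv_smul measurableSet_Ioo
    sqrt_hasDeriv sqrt_injOn (fun x : ℝ => (1-x^2) ^ (((n:ℝ)-1)/2)))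
  rw [sqrt_image_Ioo] at this
  rw [this]
  apply IntegrableOn.congr_fun ?_ (fun u hu => (abs_deriv_smul_eq n u hu).symm) measurableSet_Ioo
  apply Integrable.const_mul
  have h := (beta_integrable (1/2) (((n:ℝ)+1)/2) (by norm_num) (by positivity))
  rw [intervalIntegrable_iff_integrableOn_Ioo_of_le (by norm_num)] at h
  exact h

lemma integral_Ioo01 (n : ℕ) :
    ∫ x in Ioo (0:ℝ) 1, (1-x^2) ^ (((n:ℝ)-1)/2)
      = (1/2) * betaFn (1/2) (((n:ℝ)+1)/2) := by
  rw [← sqrt_image_Ioo, integral_image_eq_integral_abs_deriv_smul measurableSet_Ioo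
    sqrt_hasDeriv sqrt_injOn]
  rw [setIntegral_congr_fun measurableSet_Ioo (abs_deriv_smul_eq n)]
  rw [MeasureTheory.integral_const_mul]
  congr 1
  rw [← real_beta (1/2) (((n:ℝ)+1)/2) (by norm_num) (by positivity)]
  rw [intervalIntegral.integral_of_le (by norm_num : (0:ℝ) ≤ 1), integral_Ioc_eq_integral_Ioo]

lemma betaFn_symm (x y : ℝ) : betaFn x y = betaFn y x := by
  rw [betaFn, betaFn, add_comm, mul_comm]

lemma g_intervalIntegrable (n : ℕ) :
    IntervalIntegrable (fun x : ℝ => (1-x^2) ^ (((n:ℝ)-1)/2)) volume (-1) 1 := by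
  set g : ℝ → ℝ := fun x => (1-x^2) ^ (((n:ℝ)-1)/2) with hg
  have hgeven : (fun x => g (-x)) = g := funext fun x => by simp [hg, neg_sq]
  have h01 : IntervalIntegrable g volume 0 1 := by
    rw [intervalIntegrable_iff_integrableOn_Ioo_of_le (by norm_num)]
    exact g_integrableOn n
  have hneg : IntervalIntegrable g volume (-1) 0 := by
    have := ((IntervalIntegrable.iff_comp_neg (by simp)).mp h01)
    rw [hgeven] at this
    simpa using this.symm
  exact hneg.trans h01

lemma integral_one_sub_sq (n : ℕ) :
    ∫ x in (-1:ℝ)..1, (1-x^2) ^ (((n:ℝ)-1)/2) = betaFn (((n:ℝ)+1)/2) (1/2) := by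
  set g : ℝ → ℝ := fun x => (1-x^2) ^ (((n:ℝ)-1)/2) with hg
  have hgeven : (fun x => g (-x)) = g := funext fun x => by simp [hg, neg_sq]
  have h01 : IntervalIntegrable g volume 0 1 := by
    rw [intervalIntegrable_iff_integrableOn_Ioo_of_le (by norm_num)]
    exact g_integrableOn n
  have hneg : IntervalIntegrable g volume (-1) 0 := by
    have := ((IntervalIntegrable.iff_comp_neg (by simp)).mp h01)
    rw [hgeven] at this
    simpa using this.symm
  rw [← intervalIntegral.integral_add_adjacent_intervals hneg h01]
  have hrefl : ∫ x in (-1:ℝ)..0, g x = ∫ x in (0:ℝ)..1, g x := by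
    have h := intervalIntegral.integral_comp_neg (a := (0:ℝ)) (b := 1) g
    rw [hgeven] at h
    norm_num at h
    exact h.symm
  have hval : ∫ x in (0:ℝ)..1, g x = (1/2) * betaFn (1/2) (((n:ℝ)+1)/2) := by
    rw [intervalIntegral.integral_of_le (by norm_num : (0:ℝ) ≤ 1), integral_Ioc_eq_integral_Ioo]
    exact integral_Ioo01 n
  rw [hrefl, hval, betaFn_symm]
  ring

noncomputable def phi (c t : ℝ) : ℝ := (t - c^2) / (c * (1 - t))
noncomputable def phi' (c t : ℝ) : ℝ := (1 - c^2) / (c * (1 - t)^2)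

variable {c : ℝ}

lemma phi_hasDeriv (hc0 : 0 < c) (hc1 : c < 1) : ∀ t ∈ Ioo (-c) c,
    HasDerivWithinAt (phi c) (phi' c t) (Ioo (-c) c) t := by
  intro t ht
  have ht1 : (0:ℝ) < 1 - t := by have := ht.2; linarith
  have hcne : c ≠ 0 := hc0.ne'
  have htne : (1:ℝ) - t ≠ 0 := ht1.ne'
  have hne : c * (1 - t) ≠ 0 := mul_ne_zero hcne htne
  have h1 : HasDerivAt (fun t : ℝ => t - c^2) 1 t := (hasDerivAt_id t).sub_const _
  have h2 : HasDerivAt (fun t : ℝ => c * (1 - t)) (c * (0 - 1)) t :=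
    (((hasDerivAt_const t (1:ℝ)).sub (hasDerivAt_id t))).const_mul c
  have H := h1.div h2 hne
  have heq : (1 * (c * (1 - t)) - (t - c^2) * (c * (0 - 1))) / (c * (1 - t))^2
      = phi' c t := by
    rw [phi']
    field_simp
    ring
  rw [heq] at H
  exact H.hasDerivWithinAt

lemma phi_injOn (hc0 : 0 < c) (hc1 : c < 1) : InjOn (phi c) (Ioo (-c) c) := by
  intro x hx y hy h
  have hx1 : (0:ℝ) < 1 - x := by have := hx.2; linarith
  have hy1 : (0:ℝ) < 1 - y := by have := hy.2; linarith
  rw [phi, phi, div_eq_div_iff (mul_ne_zero hc0.ne' hx1.ne') (mul_ne_zero hc0.ne' hy1.ne')] at h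
  have key : (x - y) * (c * (1 - c^2)) = 0 := by linear_combination h
  have hne : c * (1 - c^2) ≠ 0 := by nlinarith
  have := (mul_eq_zero.mp key).resolve_right hne
  linarith [sub_eq_zero.mp this]

lemma phi_image (hc0 : 0 < c) (hc1 : c < 1) : phi c '' Ioo (-c) c = Ioo (-1:ℝ) 1 := by
  ext x
  constructor
  · rintro ⟨t, ⟨ht1, ht2⟩, rfl⟩
    have htl : (0:ℝ) < 1 - t := by linarith
    have hden : 0 < c * (1 - t) := mul_pos hc0 htl
    constructor
    · rw [phi, lt_div_iff₀ hden]
      nlinarith [mul_pos (show (0:ℝ) < t + c by linarith) (show (0:ℝ) < 1 - c by linarith)]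
    · rw [phi, div_lt_one hden]
      nlinarith [mul_pos (show (0:ℝ) < c - t by linarith) (show (0:ℝ) < 1 + c by linarith)]
  · rintro ⟨hx1, hx2⟩
    have hden : (0:ℝ) < 1 + c * x := by
      nlinarith [mul_pos hc0 (show (0:ℝ) < 1 + x by linarith)]
    refine ⟨c * (x + c) / (1 + c * x), ⟨?_, ?_⟩, ?_⟩
    · rw [lt_div_iff₀ hden]
      nlinarith [mul_pos (mul_pos hc0 (show (0:ℝ) < 1 + c by linarith))
        (show (0:ℝ) < 1 + x by linarith)]
    · rw [div_lt_iff₀ hden]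
      nlinarith [mul_pos (mul_pos hc0 (show (0:ℝ) < 1 - c by linarith))
        (show (0:ℝ) < 1 - x by linarith)]
    · have h1t : 1 - c * (x + c) / (1 + c * x) = (1 - c^2) / (1 + c * x) := by
        field_simp
        ring
      rw [phi, h1t]
      rw [div_eq_iff (ne_of_gt (mul_pos hc0 (div_pos (by nlinarith) hden)))]
      field_simp
      ring

lemma phi_pointwise (hc0 : 0 < c) (hc1 : c < 1) (n : ℕ) : ∀ t ∈ Ioo (-c) c,
    |phi' c t| • (1 - (phi c t)^2) ^ (((n:ℝ)-1)/2)
      = ((1-c^2) ^ (((n:ℝ)+1)/2) / c^n) *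
        (1/(1-t)^(n+1) * (c^2-t^2) ^ (((n:ℝ)-1)/2)) := by
  intro t ht
  obtain ⟨ht1, ht2⟩ := ht
  have h1t : (0:ℝ) < 1 - t := by linarith
  have h1t' : (0:ℝ) < 1 + t := by linarith
  have hc2 : (0:ℝ) < 1 - c^2 := by nlinarith
  have hct : (0:ℝ) < c^2 - t^2 := by nlinarith
  have hphi' : phi' c t = (1-c^2)/(c*(1-t)^2) := rfl
  have e1 : 1 - (phi c t)^2 = ((1-c^2) * (c^2-t^2)) / (c*(1-t))^2 := by
    rw [phi]; field_simp; ring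
  rw [smul_eq_mul, hphi', abs_of_pos (div_pos hc2 (mul_pos hc0 (pow_pos h1t 2))), e1]
  rw [Real.div_rpow (mul_pos hc2 hct).le (by positivity)]
  rw [Real.mul_rpow hc2.le hct.le]
  rw [← Real.rpow_natCast (c*(1-t)) 2, ← Real.rpow_mul (mul_pos hc0 h1t).le]
  rw [show ((2:ℕ):ℝ) * (((n:ℝ)-1)/2) = (n:ℝ) + (-1) by push_cast; ring]
  rw [Real.rpow_add (mul_pos hc0 h1t), Real.rpow_neg_one, Real.rpow_natCast,
    mul_pow, show ((n:ℝ)+1)/2 = ((n:ℝ)-1)/2 + 1 by ring,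
    Real.rpow_add hc2, Real.rpow_one, pow_succ]
  have hA : (0:ℝ) < (1-c^2) ^ (((n:ℝ)-1)/2) := Real.rpow_pos_of_pos hc2 _
  have hB : (0:ℝ) < (c^2-t^2) ^ (((n:ℝ)-1)/2) := Real.rpow_pos_of_pos hct _
  have hcc : c ≠ 0 := hc0.ne'
  have h1tn : (1:ℝ) - t ≠ 0 := h1t.ne'
  field_simp
  ring

end Aux

open MeasureTheory Set in
theorem stmt_0 (c : ℝ) (n : ℕ) (hc0 : 0 < c) (hc1 : c < 1) :
    ∫ t in (0:ℝ)..c,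
      (1 / (1 - t) ^ (n + 1) + 1 / (1 + t) ^ (n + 1)) * (c ^ 2 - t ^ 2) ^ (((n : ℝ) - 1) / 2)
      = betaFn (((n : ℝ) + 1) / 2) (1 / 2) * c ^ n / (1 - c ^ 2) ^ (((n : ℝ) + 1) / 2) := by
  have hc2 : (0:ℝ) < 1 - c^2 := by nlinarith
  set p : ℝ := ((n:ℝ)-1)/2 with hp
  set g : ℝ → ℝ := fun x => (1-x^2) ^ p with hg
  set term1 : ℝ → ℝ := fun t => 1/(1-t)^(n+1) * (c^2-t^2) ^ p with hterm1
  set term2 : ℝ → ℝ := fun t => 1/(1+t)^(n+1) * (c^2-t^2) ^ p with hterm2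
  set C : ℝ := (1-c^2) ^ (((n:ℝ)+1)/2) / c^n with hC
  have hCpos : 0 < C := div_pos (Real.rpow_pos_of_pos hc2 _) (pow_pos hc0 n)
  have hderiv := phi_hasDeriv hc0 hc1
  have hinj := phi_injOn hc0 hc1
  have himg := phi_image hc0 hc1
  have hpt : ∀ t ∈ Ioo (-c) c, |phi' c t| • g (phi c t) = C * term1 t :=
    phi_pointwise hc0 hc1 n
  -- change of variables identity
  have hCOV : ∫ x in Ioo (-1:ℝ) 1, g x = C * ∫ t in Ioo (-c) c, term1 t := by
    rw [← himg, integral_image_eq_integral_abs_deriv_smul measurableSet_Ioo hderiv hinj]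
    rw [setIntegral_congr_fun measurableSet_Ioo hpt, MeasureTheory.integral_const_mul]
  -- integrability of term1 on Ioo (-c) c
  have hgI : IntegrableOn g (Ioo (-1:ℝ) 1) := by
    have := g_intervalIntegrable n
    rw [intervalIntegrable_iff_integrableOn_Ioo_of_le (by norm_num)] at this
    exact this
  have hint_sm : IntegrableOn (fun t => |phi' c t| • g (phi c t)) (Ioo (-c) c) := by
    have hiff := integrableOn_image_iff_integrableOn_abs_deriv_smul measurableSet_Ioo
      hderiv hinj g
    rw [himg] at hiff
    exact hiff.mp hgI
  have hint_term1 : IntegrableOn term1 (Ioo (-c) c) := by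
    have h2 : IntegrableOn (fun t => C * term1 t) (Ioo (-c) c) :=
      hint_sm.congr_fun hpt measurableSet_Ioo
    have h3 : IntegrableOn (fun x => C⁻¹ * (C * term1 x)) (Ioo (-c) c) := h2.const_mul C⁻¹
    apply h3.congr_fun ?_ measurableSet_Ioo
    intro x _
    simp [inv_mul_cancel_left₀ hCpos.ne']
  have IIcc : IntervalIntegrable term1 volume (-c) c := by
    rw [intervalIntegrable_iff_integrableOn_Ioo_of_le (by linarith)]
    exact hint_term1
  have IIneg0 : IntervalIntegrable term1 volume (-c) 0 :=
    IIcc.mono_set (uIcc_subset_uIcc left_mem_uIcc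
      (by rw [Set.uIcc_of_le (by linarith)]; exact ⟨by linarith, by linarith⟩))
  have II0c : IntervalIntegrable term1 volume 0 c :=
    IIcc.mono_set (uIcc_subset_uIcc
      (by rw [Set.uIcc_of_le (by linarith)]; exact ⟨by linarith, by linarith⟩) right_mem_uIcc)
  have hfun : (fun x => term1 (-x)) = term2 := by
    funext x
    simp only [hterm1, hterm2, neg_sq, sub_neg_eq_add]
  have II2 : IntervalIntegrable term2 volume 0 c := by
    have := (IntervalIntegrable.iff_comp_neg (by simp)).mp IIneg0
    rw [hfun] at this
    simpa using this.symm
  -- main computation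
  have step1 : ∫ t in (0:ℝ)..c,
      (1 / (1 - t) ^ (n + 1) + 1 / (1 + t) ^ (n + 1)) * (c ^ 2 - t ^ 2) ^ p
      = (∫ t in (0:ℝ)..c, term1 t) + ∫ t in (0:ℝ)..c, term2 t := by
    rw [← intervalIntegral.integral_add II0c II2]
    apply intervalIntegral.integral_congr
    intro x _
    simp only [hterm1, hterm2]
    ring
  have step2 : ∫ t in (0:ℝ)..c, term2 t = ∫ t in (-c)..(0:ℝ), term1 t := by
    have h := intervalIntegral.integral_comp_neg (a := (0:ℝ)) (b := c) term1
    rw [hfun] at h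
    rw [h]
    norm_num
  have step3 : (∫ t in (-c)..(0:ℝ), term1 t) + ∫ t in (0:ℝ)..c, term1 t
      = ∫ t in (-c)..c, term1 t :=
    intervalIntegral.integral_add_adjacent_intervals IIneg0 II0c
  have step4 : ∫ t in (-c)..c, term1 t = ∫ t in Ioo (-c) c, term1 t := by
    rw [intervalIntegral.integral_of_le (by linarith), integral_Ioc_eq_integral_Ioo]
  have step5 : ∫ x in Ioo (-1:ℝ) 1, g x = betaFn (((n:ℝ)+1)/2) (1/2) := by
    rw [← integral_one_sub_sq n, intervalIntegral.integral_of_le (by norm_num : (-1:ℝ) ≤ 1),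
      integral_Ioc_eq_integral_Ioo]
  have key : C * ∫ t in Ioo (-c) c, term1 t = betaFn (((n:ℝ)+1)/2) (1/2) := by
    rw [← hCOV, step5]
  rw [step1, step2, add_comm (∫ t in (0:ℝ)..c, term1 t), step3, step4]
  rw [hC] at key
  have hcn : (c:ℝ)^n ≠ 0 := (pow_pos hc0 n).ne'
  have hD : (1-c^2) ^ (((n:ℝ)+1)/2) ≠ 0 := (Real.rpow_pos_of_pos hc2 _).ne'
  have h1c : (1:ℝ) - c^2 = 1 - c^2 := rfl
  field_simp at key ⊢
  linear_combination key
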